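/- arXiv:1810.05258 — 3 statements merged into one kernel-verified Lean document; each statement's English description precedes it below -/
import Mathlib

section
/- For every natural number k, ∫_0^∞ 2β r e^{-β r²} L_k(β r²)·L_n(β r²) dr = δ_{kn} (orthonormality on (0,∞) under the change of variable x = β r²); in particular ∫_0^∞ e^{-x} L_k(x) L_n(x) dx equals 1 if k = n and 0 otherwise. -/
open MeasureTheory Real Set Finset

/-- The n-th Laguerre polynomial. -/
noncomputable def laguerre (n : ℕ) (x : ℝ) : ℝ :=
  ∑ k ∈ Finset.range (n + 1), (-1 : ℝ) ^ k * (n.choose k) * x ^ k / (Nat.factorial k)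

lemma choose_alt (m : ℕ) : ∀ (n i : ℕ),
    ∑ j ∈ Finset.range (n + 1), (-1 : ℝ) ^ j * (n.choose j) * ((i + j).choose m)
      = (-1) ^ n * (if n ≤ m then ((i.choose (m - n) : ℕ) : ℝ) else 0) := by
  intro n
  induction n with
  | zero => intro i; simp
  | succ n ih =>
    intro i
    have h1 : ∑ j ∈ Finset.range (n + 2), (-1 : ℝ) ^ j * ((n+1).choose j) * ((i + j).choose m)
        = (∑ j ∈ Finset.range (n + 1), (-1 : ℝ) ^ j * (n.choose j) * ((i + j).choose m))
          - ∑ j ∈ Finset.range (n + 1), (-1 : ℝ) ^ j * (n.choose j) * (((i+1) + j).choose m) := by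
      rw [Finset.sum_range_succ' _ (n+1)]
      have e1 : ∀ j, ((n+1).choose (j+1) : ℝ) = (n.choose j : ℝ) + (n.choose (j+1) : ℝ) := by
        intro j; rw [Nat.choose_succ_succ']; push_cast; ring
      have e2 : ∑ j ∈ Finset.range (n + 1),
          (-1 : ℝ) ^ (j+1) * ((n+1).choose (j+1)) * ((i + (j+1)).choose m)
          = (∑ j ∈ Finset.range (n + 1), (-1 : ℝ) ^ (j+1) * (n.choose (j+1)) * ((i + (j+1)).choose m))
            - ∑ j ∈ Finset.range (n + 1), (-1 : ℝ) ^ j * (n.choose j) * (((i+1) + j).choose m) := by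
        rw [eq_sub_iff_add_eq, ← Finset.sum_add_distrib]
        apply Finset.sum_congr rfl
        intro j _
        have : i + 1 + j = i + (j + 1) := by ring
        rw [e1, this]; ring
      rw [e2]
      have e3 : ∑ j ∈ Finset.range (n + 1),
          (-1 : ℝ) ^ (j+1) * (n.choose (j+1)) * ((i + (j+1)).choose m)
          = ∑ j ∈ Finset.range (n + 2), (-1 : ℝ) ^ j * (n.choose j) * ((i + j).choose m)
            - (-1:ℝ)^0 * (n.choose 0) * ((i+0).choose m) := by
        rw [Finset.sum_range_succ' (fun j => (-1 : ℝ) ^ j * (n.choose j) * ((i + j).choose m)) (n+1)]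
        ring
      rw [e3, Finset.sum_range_succ]
      simp [Nat.choose_succ_self]
      ring
    rw [h1, ih i, ih (i+1)]
    by_cases hnm : n + 1 ≤ m
    · have h2 : m - n = (m - (n+1)) + 1 := by omega
      simp only [if_pos hnm, if_pos (Nat.le_of_succ_le hnm), h2,
        Nat.choose_succ_succ' i (m - (n+1))]
      push_cast
      ring
    · by_cases hnm' : n ≤ m
      · have hm : m - n = 0 := by omega
        simp only [if_pos hnm', if_neg hnm, hm, Nat.choose_zero_right, Nat.cast_one]
        ring
      · simp only [if_neg hnm, if_neg hnm']
        ring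

lemma exp_pow_integrableOn (m : ℕ) :
    IntegrableOn (fun x : ℝ => Real.exp (-x) * x ^ m) (Ioi 0) := by
  have h := Real.GammaIntegral_convergent (s := m + 1) (by positivity)
  refine h.congr_fun ?_ measurableSet_Ioi
  intro x hx
  simp [Real.rpow_natCast]

lemma exp_pow_integral (m : ℕ) :
    (∫ x in Ioi (0 : ℝ), Real.exp (-x) * x ^ m) = (m.factorial : ℝ) := by
  have h := Real.Gamma_eq_integral (s := (m : ℝ) + 1) (by positivity)
  rw [Real.Gamma_nat_eq_factorial] at h
  rw [h]
  apply setIntegral_congr_fun measurableSet_Ioi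
  intro x hx
  simp [Real.rpow_natCast]

lemma laguerre_std (k n : ℕ) :
    (∫ x in Ioi (0 : ℝ), Real.exp (-x) * laguerre k x * laguerre n x)
      = (if k = n then (1 : ℝ) else 0) := by
  have hfun : ∀ x : ℝ, Real.exp (-x) * laguerre k x * laguerre n x
      = ∑ i ∈ Finset.range (k+1), ∑ j ∈ Finset.range (n+1),
          ((-1:ℝ)^i * (k.choose i) / i.factorial) * ((-1:ℝ)^j * (n.choose j) / j.factorial)
            * (Real.exp (-x) * x ^ (i+j)) := by
    intro x
    simp only [laguerre, Finset.mul_sum, Finset.sum_mul]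
    rw [Finset.sum_comm]
    refine Finset.sum_congr rfl fun i _ => Finset.sum_congr rfl fun j _ => ?_
    rw [pow_add]; ring
  have hint : ∀ (i j : ℕ), Integrable
      (fun x : ℝ => ((-1:ℝ)^i * (k.choose i) / i.factorial) * ((-1:ℝ)^j * (n.choose j) / j.factorial)
        * (Real.exp (-x) * x ^ (i+j))) (volume.restrict (Ioi 0)) := by
    intro i j
    exact (exp_pow_integrableOn (i+j)).const_mul _
  calc (∫ x in Ioi (0 : ℝ), Real.exp (-x) * laguerre k x * laguerre n x)
      = ∫ x in Ioi (0 : ℝ), ∑ i ∈ Finset.range (k+1), ∑ j ∈ Finset.range (n+1),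
          ((-1:ℝ)^i * (k.choose i) / i.factorial) * ((-1:ℝ)^j * (n.choose j) / j.factorial)
            * (Real.exp (-x) * x ^ (i+j)) :=
        setIntegral_congr_fun measurableSet_Ioi (fun x _ => hfun x)
    _ = ∑ i ∈ Finset.range (k+1), ∑ j ∈ Finset.range (n+1),
          ((-1:ℝ)^i * (k.choose i) / i.factorial) * ((-1:ℝ)^j * (n.choose j) / j.factorial)
            * ((i+j).factorial : ℝ) := by
        rw [integral_finset_sum _ (fun i _ => integrable_finset_sum _ (fun j _ => hint i j))]
        refine Finset.sum_congr rfl fun i _ => ?_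
        rw [integral_finset_sum _ (fun j _ => hint i j)]
        refine Finset.sum_congr rfl fun j _ => ?_
        rw [MeasureTheory.integral_const_mul, exp_pow_integral]
    _ = ∑ i ∈ Finset.range (k+1), (-1:ℝ)^i * (k.choose i)
          * ∑ j ∈ Finset.range (n+1), (-1:ℝ)^j * (n.choose j) * ((i+j).choose i) := by
        refine Finset.sum_congr rfl fun i _ => ?_
        rw [Finset.mul_sum]
        refine Finset.sum_congr rfl fun j _ => ?_
        have hfact : ((i+j).factorial : ℝ) = ((i+j).choose i : ℝ) * i.factorial * j.factorial := by
          rw_mod_cast [← Nat.choose_mul_factorial_mul_factorial (Nat.le_add_right i j),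
            Nat.add_sub_cancel_left]
        rw [hfact]
        have hi : (i.factorial : ℝ) ≠ 0 := Nat.cast_ne_zero.mpr (Nat.factorial_ne_zero i)
        have hj : (j.factorial : ℝ) ≠ 0 := Nat.cast_ne_zero.mpr (Nat.factorial_ne_zero j)
        field_simp
    _ = ∑ i ∈ Finset.range (k+1), (-1:ℝ)^i * (k.choose i) * ((-1)^n * (i.choose n : ℝ)) := by
        refine Finset.sum_congr rfl fun i _ => ?_
        rw [choose_alt i n i]
        congr 1
        by_cases h : n ≤ i
        · rw [if_pos h, Nat.choose_symm h]
        · rw [if_neg h, Nat.choose_eq_zero_of_lt (by omega)]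
          simp
    _ = (-1:ℝ)^n * ∑ i ∈ Finset.range (k+1), (-1:ℝ)^i * (k.choose i) * ((0+i).choose n) := by
        rw [Finset.mul_sum]
        refine Finset.sum_congr rfl fun i _ => ?_
        rw [zero_add]; ring
    _ = (if k = n then (1 : ℝ) else 0) := by
        rw [choose_alt n k 0]
        by_cases h : k = n
        · subst h
          rw [if_pos le_rfl, Nat.sub_self]
          norm_num [← pow_add, ← two_mul, pow_mul]
        · by_cases h2 : k ≤ n
          · rw [if_pos h2, if_neg h, Nat.choose_eq_zero_of_lt (by omega)]
            simp
          · rw [if_neg h2, if_neg h]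
            ring

/-- Orthonormality of the Laguerre polynomials, both in the weighted form on (0,∞)
after the change of variable x = β r², and in the standard form. -/
theorem laguerre_orthonormal (β : ℝ) (hβ : 0 < β) (k n : ℕ) :
    (∫ r in Ioi (0 : ℝ),
        2 * β * r * Real.exp (-β * r ^ 2) * laguerre k (β * r ^ 2) * laguerre n (β * r ^ 2)) =
      (if k = n then (1 : ℝ) else 0) ∧
    (∫ x in Ioi (0 : ℝ), Real.exp (-x) * laguerre k x * laguerre n x) =
      (if k = n then (1 : ℝ) else 0) := by
  refine ⟨?_, laguerre_std k n⟩
  have himg : (fun r : ℝ => β * r ^ 2) '' Set.Ioi 0 = Set.Ioi 0 := by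
    ext x
    simp only [Set.mem_image, Set.mem_Ioi]
    constructor
    · rintro ⟨r, hr, rfl⟩; positivity
    · intro hx
      refine ⟨Real.sqrt (x / β), Real.sqrt_pos.mpr (by positivity), ?_⟩
      rw [Real.sq_sqrt (by positivity)]
      field_simp
  have hderiv : ∀ r ∈ Ioi (0:ℝ),
      HasDerivWithinAt (fun r : ℝ => β * r ^ 2) (2 * β * r) (Ioi 0) r := by
    intro r hr
    have h := ((hasDerivAt_pow 2 r).const_mul β).hasDerivWithinAt (s := Ioi (0:ℝ))
    exact h.congr_deriv (by norm_num; ring)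
  have hinj : InjOn (fun r : ℝ => β * r ^ 2) (Ioi 0) := by
    intro a ha b hb hab
    simp only [Set.mem_Ioi] at ha hb
    have h2 : a ^ 2 = b ^ 2 := mul_left_cancel₀ hβ.ne' hab
    have hle : a ≤ b := by nlinarith
    have hge : b ≤ a := by nlinarith
    linarith
  have key := integral_image_eq_integral_abs_deriv_smul measurableSet_Ioi hderiv hinj
    (fun x => Real.exp (-x) * laguerre k x * laguerre n x)
  rw [himg] at key
  calc (∫ r in Ioi (0 : ℝ),
        2 * β * r * Real.exp (-β * r ^ 2) * laguerre k (β * r ^ 2) * laguerre n (β * r ^ 2))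
      = ∫ r in Ioi (0 : ℝ), |2 * β * r| •
          (Real.exp (-(β * r ^ 2)) * laguerre k (β * r ^ 2) * laguerre n (β * r ^ 2)) := by
        apply setIntegral_congr_fun measurableSet_Ioi
        intro r hr
        simp only [Set.mem_Ioi] at hr
        simp only [smul_eq_mul]
        rw [abs_of_pos (by positivity : (0:ℝ) < 2 * β * r)]
        ring_nf
    _ = ∫ x in Ioi (0 : ℝ), Real.exp (-x) * laguerre k x * laguerre n x := key.symm
    _ = (if k = n then (1 : ℝ) else 0) := laguerre_std k n
end

section
/- For natural numbers n and l, ∫_0^∞ t^l e^{-t} L_n(t) dt = (-1)^n C(l, n) l! if n ≤ l, and equals 0 if n > l. -/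
open MeasureTheory Real Set Finset

lemma integrableOn_pow_exp (m : ℕ) :
    IntegrableOn (fun t : ℝ => t ^ m * Real.exp (-t)) (Ioi 0) := by
  have h := Real.GammaIntegral_convergent (s := (m + 1 : ℝ)) (by positivity)
  refine h.congr_fun (fun x hx => ?_) measurableSet_Ioi
  beta_reduce
  rw [add_sub_cancel_right, Real.rpow_natCast, mul_comm]

lemma integral_pow_exp (m : ℕ) :
    ∫ t in Ioi (0 : ℝ), t ^ m * Real.exp (-t) = (Nat.factorial m : ℝ) := by
  rw [← Real.Gamma_nat_eq_factorial m,
    Real.Gamma_eq_integral (by positivity : (0:ℝ) < m + 1)]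
  refine setIntegral_congr_fun measurableSet_Ioi (fun x hx => ?_)
  rw [add_sub_cancel_right, Real.rpow_natCast, mul_comm]

lemma alt_sum_succ (n : ℕ) (f : ℕ → ℝ) :
    ∑ k ∈ range (n + 2), (-1 : ℝ) ^ k * ((n + 1).choose k) * f k
      = ∑ k ∈ range (n + 1), (-1 : ℝ) ^ k * (n.choose k) * (f k - f (k + 1)) := by
  have h1 : ∑ k ∈ range (n + 2), (-1 : ℝ) ^ k * ((n + 1).choose k) * f k
      = (∑ k ∈ range (n + 1), (-1 : ℝ) ^ (k+1) * ((n.choose k : ℝ) + n.choose (k+1)) * f (k+1))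
        + f 0 := by
    rw [Finset.sum_range_succ']
    simp [Nat.choose_succ_succ]
  have h2 : ∑ k ∈ range (n + 1), (-1 : ℝ) ^ (k+1) * (n.choose (k+1) : ℝ) * f (k+1)
      = (∑ k ∈ range (n + 1), (-1 : ℝ) ^ k * (n.choose k : ℝ) * f k) - f 0 := by
    have h3 : ∑ k ∈ range (n + 2), (-1 : ℝ) ^ k * (n.choose k : ℝ) * f k
        = (∑ k ∈ range (n + 1), (-1 : ℝ) ^ (k+1) * (n.choose (k+1) : ℝ) * f (k+1)) + f 0 := by
      rw [Finset.sum_range_succ']; simp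
    have h4 : ∑ k ∈ range (n + 2), (-1 : ℝ) ^ k * (n.choose k : ℝ) * f k
        = ∑ k ∈ range (n + 1), (-1 : ℝ) ^ k * (n.choose k : ℝ) * f k := by
      rw [Finset.sum_range_succ, Nat.choose_succ_self]; simp
    rw [h4] at h3; linarith
  have h5 : ∀ k ∈ range (n+1), (-1 : ℝ) ^ (k+1) * ((n.choose k : ℝ) + n.choose (k+1)) * f (k+1)
      = (-1 : ℝ) ^ (k+1) * (n.choose (k+1) : ℝ) * f (k+1)
        + (-((-1 : ℝ) ^ k * (n.choose k : ℝ) * f (k+1))) := by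
    intro k _; ring
  have h6 : ∑ k ∈ range (n + 1), (-1 : ℝ) ^ k * (n.choose k) * (f k - f (k + 1))
      = (∑ k ∈ range (n + 1), (-1 : ℝ) ^ k * (n.choose k : ℝ) * f k)
        - ∑ k ∈ range (n + 1), (-1 : ℝ) ^ k * (n.choose k : ℝ) * f (k+1) := by
    rw [← Finset.sum_sub_distrib]; exact Finset.sum_congr rfl fun k _ => by ring
  rw [h1, Finset.sum_congr rfl h5, Finset.sum_add_distrib, h2, h6,
    Finset.sum_neg_distrib]
  ring

lemma key_sum (n : ℕ) : ∀ m l : ℕ,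
    ∑ k ∈ range (n + 1), (-1 : ℝ) ^ k * (n.choose k) * ((m + k).choose l)
      = (-1 : ℝ) ^ n * (if n ≤ l then ((m.choose (l - n)) : ℝ) else 0) := by
  induction n with
  | zero => intro m l; simp
  | succ n ih =>
    intro m l
    rw [show n + 1 + 1 = n + 2 from rfl,
      alt_sum_succ n (fun k => (((m + k).choose l : ℕ) : ℝ))]
    cases l with
    | zero =>
      simp [Nat.lt_irrefl]
    | succ l' =>
      have hstep : ∀ k ∈ range (n + 1),
          (-1 : ℝ) ^ k * (n.choose k) *
            ((((m + k).choose (l' + 1) : ℕ) : ℝ) - (((m + (k + 1)).choose (l' + 1) : ℕ) : ℝ))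
          = -((-1 : ℝ) ^ k * (n.choose k) * (((m + k).choose l' : ℕ) : ℝ)) := by
        intro k _
        have : m + (k + 1) = (m + k) + 1 := by ring
        rw [this, Nat.choose_succ_succ (m + k) l']
        push_cast
        ring
      rw [Finset.sum_congr rfl hstep, Finset.sum_neg_distrib, ih m l']
      by_cases h : n ≤ l'
      · rw [if_pos h, if_pos (by omega : n + 1 ≤ l' + 1),
          show l' + 1 - (n + 1) = l' - n by omega]
        ring
      · rw [if_neg h, if_neg (by omega : ¬ n + 1 ≤ l' + 1)]
        ring

/-- ∫_0^∞ t^l e^{-t} L_n(t) dt = (-1)^n C(l,n) l! for n ≤ l, and 0 for n > l. -/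
theorem integral_pow_exp_laguerre (n l : ℕ) :
    (∫ t in Ioi (0 : ℝ), t ^ l * Real.exp (-t) * laguerre n t) =
      if n ≤ l then (-1 : ℝ) ^ n * (l.choose n) * (Nat.factorial l) else 0 := by
  have hfun : (fun t : ℝ => t ^ l * Real.exp (-t) * laguerre n t)
      = fun t : ℝ => ∑ k ∈ range (n + 1),
          ((-1 : ℝ) ^ k * (n.choose k) / (Nat.factorial k)) * (t ^ (l + k) * Real.exp (-t)) := by
    funext t
    simp only [laguerre, Finset.mul_sum]
    exact Finset.sum_congr rfl fun k _ => by rw [pow_add]; ring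
  rw [hfun, integral_finset_sum _ (fun k _ =>
    ((integrableOn_pow_exp (l + k)).const_mul _))]
  simp_rw [MeasureTheory.integral_const_mul, integral_pow_exp]
  have hterm : ∀ k ∈ range (n + 1),
      (-1 : ℝ) ^ k * (n.choose k) / (Nat.factorial k) * ((Nat.factorial (l + k) : ℕ) : ℝ)
        = ((-1 : ℝ) ^ k * (n.choose k) * (((l + k).choose l : ℕ) : ℝ)) * (Nat.factorial l : ℝ) := by
    intro k _
    have h : (l + k).choose l * Nat.factorial l * Nat.factorial k = Nat.factorial (l + k) := by
      have := Nat.choose_mul_factorial_mul_factorial (Nat.le_add_right l k)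
      simpa using this
    have h2 : ((Nat.factorial (l + k) : ℕ) : ℝ)
        = (((l + k).choose l : ℕ) : ℝ) * (Nat.factorial l : ℝ) * (Nat.factorial k : ℝ) := by
      rw [← h]; push_cast; ring
    rw [h2]
    have hk : (Nat.factorial k : ℝ) ≠ 0 := Nat.cast_ne_zero.mpr (Nat.factorial_ne_zero k)
    field_simp
  rw [Finset.sum_congr rfl hterm, ← Finset.sum_mul, key_sum n l l]
  by_cases h : n ≤ l
  · rw [if_pos h, if_pos h, Nat.choose_symm h]
  · rw [if_neg h, if_neg h]
    ring
end

section
/- Kummer's transformation: for real a, b (with b not a nonpositive integer) and all real t, ₁F₁(a; b; t) = e^t · ₁F₁(b−a; b; −t), where ₁F₁(a;b;t) = ∑_{n=0}^∞ (a)_n t^n / ((b)_n n!). -/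
open Finset


lemma kummer_key (n : ℕ) : ∀ a b : ℝ,
    ∑ k ∈ range (n+1), (-1:ℝ)^k * (n.choose k : ℝ) *
      (∏ i ∈ range k, (b - a + i)) * (∏ i ∈ range (n-k), (b + k + i))
      = ∏ i ∈ range n, (a + i) := by
  induction n with
  | zero => intro a b; simp
  | succ n ih =>
    intro a b
    set G : ℕ → ℝ := fun k => (-1:ℝ)^k * (n.choose k : ℝ) *
      (∏ i ∈ range k, (b - a + i)) * (∏ i ∈ range (n+1-k), (b + k + i)) with hG
    set U : ℕ → ℝ := fun k => (-1:ℝ)^(k+1) * (n.choose k : ℝ) *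
      ((∏ i ∈ range k, (b - a + i)) * (b - a + k)) * (∏ i ∈ range (n-k), (b + k + 1 + i)) with hU
    set W : ℕ → ℝ := fun k => (-1:ℝ)^k * (n.choose k : ℝ) *
      (∏ i ∈ range k, (b - a + i)) * (∏ i ∈ range (n-k), (b + k + 1 + i)) with hW
    set f : ℕ → ℝ := fun k => (-1:ℝ)^k * ((n+1).choose k : ℝ) *
      (∏ i ∈ range k, (b - a + i)) * (∏ i ∈ range (n+1-k), (b + k + i)) with hf
    have h0 : ∑ k ∈ range (n+1+1), f k = (∑ k ∈ range (n+1), f (k+1)) + f 0 :=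
      Finset.sum_range_succ' f (n+1)
    have h1 : ∀ k ∈ range (n+1), f (k+1) = G (k+1) + U k := by
      intro k hk
      have hnk : n + 1 - (k+1) = n - k := by omega
      simp only [hf, hG, hU, hnk]
      rw [Nat.choose_succ_succ n k, Finset.prod_range_succ]
      have : (∏ i ∈ range (n-k), (b + ((k:ℕ)+1 : ℕ) + (i:ℝ)))
          = ∏ i ∈ range (n-k), (b + (k:ℝ) + 1 + i) := by
        apply Finset.prod_congr rfl; intro i _; push_cast; ring
      rw [this]; push_cast; ring
    have h2 : (∑ k ∈ range (n+1), G (k+1)) + f 0 = ∑ k ∈ range (n+1), G k := by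
      have e : (∑ k ∈ range (n+1), G (k+1)) + G 0 = ∑ k ∈ range (n+1+1), G k :=
        (Finset.sum_range_succ' G (n+1)).symm
      have hf0 : f 0 = G 0 := by simp [hf, hG]
      have hGtop : G (n+1) = 0 := by
        simp [hG, Nat.choose_eq_zero_of_lt (Nat.lt_succ_self n)]
      rw [hf0, e, Finset.sum_range_succ, hGtop, add_zero]
    have h3 : ∀ k ∈ range (n+1), G k + U k = a * W k := by
      intro k hk
      have hk' : k ≤ n := Nat.lt_succ_iff.mp (mem_range.mp hk)
      have hnk : n + 1 - k = (n - k) + 1 := by omega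
      simp only [hG, hU, hW, hnk]
      rw [Finset.prod_range_succ' (fun i => b + (k:ℝ) + (i:ℝ)) (n-k)]
      have : (∏ i ∈ range (n-k), (b + (k:ℝ) + ((i+1 : ℕ) : ℝ)))
          = ∏ i ∈ range (n-k), (b + (k:ℝ) + 1 + i) := by
        apply Finset.prod_congr rfl; intro i _; push_cast; ring
      rw [this]; push_cast; ring
    calc ∑ k ∈ range (n+1+1), f k
        = (∑ k ∈ range (n+1), (G (k+1) + U k)) + f 0 := by
          rw [h0, Finset.sum_congr rfl h1]
      _ = ((∑ k ∈ range (n+1), G (k+1)) + f 0) + ∑ k ∈ range (n+1), U k := by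
          rw [Finset.sum_add_distrib]; ring
      _ = (∑ k ∈ range (n+1), G k) + ∑ k ∈ range (n+1), U k := by rw [h2]
      _ = ∑ k ∈ range (n+1), (G k + U k) := by rw [Finset.sum_add_distrib]
      _ = ∑ k ∈ range (n+1), a * W k := Finset.sum_congr rfl h3
      _ = a * ∑ k ∈ range (n+1), W k := by rw [Finset.mul_sum]
      _ = a * ∏ i ∈ range n, (a + 1 + i) := by
          congr 1
          have : ∀ k ∈ range (n+1), W k = (-1:ℝ)^k * (n.choose k : ℝ) *
              (∏ i ∈ range k, ((b+1) - (a+1) + i)) * (∏ i ∈ range (n-k), ((b+1) + k + i)) := by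
            intro k _
            simp only [hW]
            congr 1
            · congr 1
              apply Finset.prod_congr rfl; intro i _; ring
            · apply Finset.prod_congr rfl; intro i _; ring
          rw [Finset.sum_congr rfl this, ih (a+1) (b+1)]
      _ = ∏ i ∈ range (n+1), (a + i) := by
          rw [Finset.prod_range_succ' (fun i => a + (i:ℝ)) n]
          have : (∏ i ∈ range n, (a + ((i+1 : ℕ) : ℝ))) = ∏ i ∈ range n, (a + 1 + i) := by
            apply Finset.prod_congr rfl; intro i _; push_cast; ring
          rw [this]; push_cast; ring


lemma F11_summable_norm (a b t : ℝ) (hb : ∀ k : ℕ, b + k ≠ 0) :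
    Summable fun n : ℕ => ‖(∏ i ∈ range n, (a + i)) * t ^ n /
      ((∏ i ∈ range n, (b + i)) * (Nat.factorial n))‖ := by
  set u : ℕ → ℝ := fun n => (∏ i ∈ range n, (a + i)) * t ^ n /
      ((∏ i ∈ range n, (b + i)) * (Nat.factorial n)) with hu
  rw [← summable_norm_iff (E := ℝ)]
  simp only [norm_norm]
  apply summable_of_ratio_norm_eventually_le (r := 1/2) (by norm_num)
  have hbn : ∀ n : ℕ, (∏ i ∈ range n, (b + (i:ℝ))) ≠ 0 := by
    intro n
    exact Finset.prod_ne_zero_iff.mpr fun i _ => hb i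
  obtain ⟨N, hN1, hN2, hN3, hN4⟩ : ∃ N : ℕ, (N:ℝ) ≥ 2*|b| ∧ (N:ℝ) ≥ |a| ∧ (N:ℝ) ≥ 8*|t| ∧ (N:ℝ) ≥ 1 := by
    obtain ⟨N, hN⟩ := exists_nat_ge (max (max (2*|b|) (|a|)) (max (8*|t|) 1))
    exact ⟨N, le_trans (le_max_left _ _ |>.trans (le_max_left _ _)) hN,
      le_trans (le_max_right _ _ |>.trans (le_max_left _ _)) hN,
      le_trans (le_max_left _ _ |>.trans (le_max_right _ _)) hN,
      le_trans (le_max_right _ _ |>.trans (le_max_right _ _)) hN⟩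
  filter_upwards [Filter.eventually_ge_atTop N] with n hn
  show ‖‖u (n+1)‖‖ ≤ 1/2 * ‖‖u n‖‖
  rw [norm_norm, norm_norm]
  have hfac : ((Nat.factorial n : ℕ) : ℝ) ≠ 0 := by positivity
  have hrec : u (n+1) = u n * ((a + n) * t / ((b + n) * (n+1))) := by
    simp only [hu]
    rw [Finset.prod_range_succ, Finset.prod_range_succ, Nat.factorial_succ, pow_succ]
    push_cast
    field_simp
  rw [hrec, norm_mul]
  rw [mul_comm ((1:ℝ)/2) _]
  apply mul_le_mul_of_nonneg_left _ (norm_nonneg _)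
  have hn' : (N:ℝ) ≤ n := by exact_mod_cast hn
  have hd : (0:ℝ) < |b + n| * (n+1) := by
    apply mul_pos (abs_pos.mpr (hb n)) (by positivity)
  have habs : |(b + (n:ℝ)) * ((n:ℝ)+1)| = |b + (n:ℝ)| * ((n:ℝ)+1) := by
    rw [abs_mul, abs_of_pos (show (0:ℝ) < (n:ℝ)+1 by positivity)]
  rw [Real.norm_eq_abs, abs_div, abs_mul, habs, div_le_iff₀ hd]
  have h1 : |a + (n:ℝ)| ≤ 2 * n := by
    have := abs_add_le a (n:ℝ)
    have : |a + (n:ℝ)| ≤ |a| + n := by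
      simpa [abs_of_nonneg (show (0:ℝ) ≤ n by positivity)] using this
    nlinarith
  have h2 : (n:ℝ)/2 ≤ |b + (n:ℝ)| := by
    have h := abs_add_le (b + (n:ℝ)) (-b)
    have hs : b + (n:ℝ) + (-b) = (n:ℝ) := by ring
    rw [hs, abs_neg, abs_of_nonneg (show (0:ℝ) ≤ n by positivity)] at h
    nlinarith
  nlinarith [abs_nonneg t, abs_nonneg (a + (n:ℝ)), abs_nonneg (b + (n:ℝ)),
    mul_le_mul_of_nonneg_left hn' (abs_nonneg t)]

lemma kummer_coeff (a b t : ℝ) (hb : ∀ k : ℕ, b + k ≠ 0) (n : ℕ) :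
    ∑ kl ∈ antidiagonal n,
      ((∏ i ∈ range kl.1, (b - a + i)) * (-t) ^ kl.1 /
        ((∏ i ∈ range kl.1, (b + i)) * (Nat.factorial kl.1))) *
      (t ^ kl.2 / (Nat.factorial kl.2))
    = (∏ i ∈ range n, (a + i)) * t ^ n /
      ((∏ i ∈ range n, (b + i)) * (Nat.factorial n)) := by
  have hbn : ∀ m : ℕ, (∏ i ∈ range m, (b + (i:ℝ))) ≠ 0 := fun m =>
    Finset.prod_ne_zero_iff.mpr fun i _ => hb i
  rw [Finset.Nat.sum_antidiagonal_eq_sum_range_succ_mk]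
  have hterm : ∀ k ∈ range (n+1),
      ((∏ i ∈ range k, (b - a + i)) * (-t) ^ k /
        ((∏ i ∈ range k, (b + i)) * (Nat.factorial k))) *
      (t ^ (n-k) / (Nat.factorial (n-k)))
      = (t ^ n / ((∏ i ∈ range n, (b + i)) * (Nat.factorial n))) *
        ((-1:ℝ)^k * (n.choose k : ℝ) *
          (∏ i ∈ range k, (b - a + i)) * (∏ i ∈ range (n-k), (b + k + i))) := by
    intro k hk
    have hk' : k ≤ n := Nat.lt_succ_iff.mp (mem_range.mp hk)
    have hsplit : (∏ i ∈ range n, (b + (i:ℝ)))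
        = (∏ i ∈ range k, (b + (i:ℝ))) * ∏ i ∈ range (n-k), (b + (k:ℝ) + i) := by
      have h1 : n = k + (n - k) := by omega
      conv_lhs => rw [h1]
      rw [Finset.prod_range_add]
      congr 1
      apply Finset.prod_congr rfl
      intro i _; push_cast; ring
    have hfact : ((Nat.factorial n : ℕ) : ℝ)
        = (n.choose k : ℝ) * (Nat.factorial k : ℝ) * (Nat.factorial (n-k) : ℝ) := by
      rw [← Nat.choose_mul_factorial_mul_factorial hk']; push_cast; ring
    have ht : t ^ n = t ^ k * t ^ (n-k) := by
      rw [← pow_add]; congr 1; omega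
    have hneg : (-t) ^ k = (-1:ℝ)^k * t ^ k := by
      rw [neg_pow]
    rw [hsplit, hfact, ht, hneg]
    have hch : (n.choose k : ℝ) ≠ 0 := by
      exact_mod_cast Nat.choose_pos hk' |>.ne'
    have hR : (∏ i ∈ range (n-k), (b + (k:ℝ) + i)) ≠ 0 := by
      apply Finset.prod_ne_zero_iff.mpr
      intro i _
      have h := hb (k + i); push_cast at h
      intro h0; exact h (by linarith)
    have hfk : ((Nat.factorial k : ℕ) : ℝ) ≠ 0 := Nat.cast_ne_zero.mpr (Nat.factorial_ne_zero k)
    have hfnk : ((Nat.factorial (n-k) : ℕ) : ℝ) ≠ 0 := Nat.cast_ne_zero.mpr (Nat.factorial_ne_zero (n-k))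
    field_simp
  rw [Finset.sum_congr rfl hterm, ← Finset.mul_sum, kummer_key n a b]
  ring


/-- The confluent hypergeometric series ₁F₁(a; b; t) = ∑ₙ (a)ₙ tⁿ/((b)ₙ n!). -/
noncomputable def F11 (a b t : ℝ) : ℝ :=
  ∑' n : ℕ, (∏ i ∈ Finset.range n, (a + i)) * t ^ n /
    ((∏ i ∈ Finset.range n, (b + i)) * (Nat.factorial n))

/-- Kummer's transformation: ₁F₁(a; b; t) = eᵗ ₁F₁(b−a; b; −t), for b not a
nonpositive integer. -/
theorem kummer_transformation (a b t : ℝ) (hb : ∀ k : ℕ, b + k ≠ 0) :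
    F11 a b t = Real.exp t * F11 (b - a) b (-t) := by
  have hexp : Real.exp t = ∑' n : ℕ, t ^ n / (Nat.factorial n : ℝ) := by
    rw [Real.exp_eq_exp_ℝ, NormedSpace.exp_eq_tsum_div]
  have hsum1 : Summable fun n : ℕ => ‖t ^ n / (Nat.factorial n : ℝ)‖ := by
    have h := Real.summable_pow_div_factorial |t|
    apply h.congr
    intro n
    rw [Real.norm_eq_abs, abs_div, abs_pow, Nat.abs_cast]
  have hsum2 := F11_summable_norm (b - a) b (-t) hb
  rw [F11, F11, hexp, mul_comm]
  rw [tsum_mul_tsum_eq_tsum_sum_antidiagonal_of_summable_norm hsum2 hsum1]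
  exact tsum_congr fun n => (kummer_coeff a b t hb n).symm
end
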